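/- arXiv:2301.10104 — 2 statements merged into one kernel-verified Lean document; each statement's English description precedes it below -/
import Mathlib

section
/- Let 0 < α < 1 and let h ∈ L²(𝕋) be a nonnegative function with ∫_{-π}^{π} log h(t) dt > -∞ and N_α(h) < +∞. Then for every δ > 0 the set 𝕋_{h,δ} := { e^{iθ} ∈ 𝕋_h : limsup_{r→1⁻} (1/2π) ∫_{𝕋_h^+(θ)} ((1-r²)/|e^{iφ}-re^{iθ}|²) log(h(φ)/h(θ)) dφ ≥ δ } has zero Lebesgue measure. -/
open MeasureTheory Real Set Filter
open scoped ENNReal NNReal Topology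

noncomputable section

/-- The point `e^{it}` on the unit circle. -/
def circ (t : ℝ) : ℂ := Complex.exp (t * Complex.I)

/-- Squared `L²(𝕋)` norm of `h`, identified with a function on `(-π, π]`. -/
def normSq2 (h : ℝ → ℝ) : ℝ≥0∞ := ∫⁻ t in Ioc (-π) π, ENNReal.ofReal ((h t) ^ 2)

/-- `N_α(h) = ∫∫ |h(φ)-h(θ)|²/|e^{iφ}-e^{iθ}|^{2-α} dφ dθ`. -/
def Nint (α : ℝ) (h : ℝ → ℝ) : ℝ≥0∞ :=
  ∫⁻ θ in Ioc (-π) π, ∫⁻ φ in Ioc (-π) π,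
    ENNReal.ofReal (|h φ - h θ| ^ 2 / ‖circ φ - circ θ‖ ^ (2 - α))

/-- The weighted Dirichlet integral `𝒟_α(f) = (1/π) ∫_𝔻 |f'(z)|² (1-|z|)^α dA(z)`. -/
def Dint (α : ℝ) (f : ℂ → ℂ) : ℝ≥0∞ :=
  (ENNReal.ofReal π)⁻¹ *
    ∫⁻ z in Metric.ball (0 : ℂ) 1, ENNReal.ofReal (‖deriv f z‖ ^ 2 * (1 - ‖z‖) ^ α)

/-- The outer function `O_h`. -/
def outer (h : ℝ → ℝ) (z : ℂ) : ℂ :=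
  Complex.exp (((2 * π : ℝ) : ℂ)⁻¹ *
    ∫ φ in Ioc (-π) π, ((circ φ + z) / (circ φ - z)) * (Real.log (h φ) : ℂ))

/-- `‖O_h‖²_{𝒟_α} = |O_h(0)|² + 𝒟_α(O_h)`. -/
def DNorm (α : ℝ) (h : ℝ → ℝ) : ℝ≥0∞ :=
  ENNReal.ofReal (‖outer h 0‖ ^ 2) + Dint α (outer h)

/-- Inner integral of `n_α`: `∫_{h(φ) ≤ h(θ)/2, |e^{iφ}-e^{iθ}| ≥ δ} log(h(θ)/h(φ))/|e^{iφ}-e^{iθ}|² dφ`. -/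
def aInt (h : ℝ → ℝ) (δ θ : ℝ) : ℝ≥0∞ :=
  ∫⁻ φ in Ioc (-π) π,
    {φ : ℝ | h φ ≤ h θ / 2 ∧ δ ≤ ‖circ φ - circ θ‖}.indicator
      (fun φ => ENNReal.ofReal (Real.log (h θ / h φ) / ‖circ φ - circ θ‖ ^ 2)) φ

/-- Inner integral of `ñ_α`. -/
def tInt (α : ℝ) (h : ℝ → ℝ) (δ θ : ℝ) : ℝ≥0∞ :=
  ∫⁻ φ in Ioc (-π) π,
    {φ : ℝ | h φ ≤ h θ / 2 ∧ ‖circ φ - circ θ‖ ≤ δ}.indicator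
      (fun φ => ENNReal.ofReal (Real.log (h θ / h φ) / ‖circ φ - circ θ‖ ^ (2 - α))) φ

/-- `n_α(h,λ)`. -/
def nSmall (α : ℝ) (h lam : ℝ → ℝ) : ℝ≥0∞ :=
  ∫⁻ θ in Ioc (-π) π, ENNReal.ofReal ((h θ) ^ 2) * aInt h (lam θ) θ ^ (1 - α)

/-- `ñ_α(h,λ)`. -/
def nTilde (α : ℝ) (h lam : ℝ → ℝ) : ℝ≥0∞ :=
  ∫⁻ θ in Ioc (-π) π, ENNReal.ofReal ((h θ) ^ 2) * tInt α h (lam θ) θ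

/-- Membership in `Λ`: measurable and strictly positive a.e. on the circle. -/
def MemLambda (lam : ℝ → ℝ) : Prop :=
  Measurable lam ∧ ∀ᵐ θ ∂(volume.restrict (Ioc (-π) π)), 0 < lam θ

/-- `a_{h,δ}(θ)`. -/
def aH (h : ℝ → ℝ) (δ θ : ℝ) : ℝ≥0∞ := (ENNReal.ofReal (2 * π))⁻¹ * aInt h δ θ

/-- `ã_{h,δ}(θ)`. -/
def aTildeH (h : ℝ → ℝ) (δ θ : ℝ) : ℝ≥0∞ :=
  (ENNReal.ofReal (2 * π))⁻¹ *
    ∫⁻ φ in Ioc (-π) π,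
      {φ : ℝ | h φ ≤ h θ / 2 ∧ ‖circ φ - circ θ‖ ≤ δ}.indicator
        (fun φ => ENNReal.ofReal (Real.log (h θ / h φ))) φ

/-- `μ_h(θ)`. -/
def muH (h : ℝ → ℝ) (θ : ℝ) : ℝ :=
  sSup {μ : ℝ | μ ∈ Ioc (0 : ℝ) 1 ∧ ∀ δ : ℝ, 0 < δ → δ ≤ μ →
    ENNReal.ofReal δ * aH h δ θ ≤ 2 ∧ aTildeH h δ θ / ENNReal.ofReal δ ≤ 2}

/-- `𝕋_h`: the points where `O_h` has a radial limit of modulus `h(θ) ∈ (0,∞)`. -/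
def ThSet (h : ℝ → ℝ) : Set ℝ :=
  {θ : ℝ | 0 < h θ ∧
    Tendsto (fun r : ℝ => ‖outer h ((r : ℂ) * circ θ)‖)
      (nhdsWithin 1 (Iio 1)) (nhds (h θ))}

/-- `v_h`, the harmonic conjugate of the Poisson integral of `log h`. -/
def vH (h : ℝ → ℝ) (z : ℂ) : ℝ :=
  (2 * π)⁻¹ * ∫ φ in Ioc (-π) π, ((circ φ + z) / (circ φ - z)).im * Real.log (h φ)

/-- The angular partial derivative `(∂v_h/∂θ)(re^{iθ})`. -/
def dvTheta (h : ℝ → ℝ) (r θ : ℝ) : ℝ := deriv (fun t : ℝ => vH h ((r : ℂ) * circ t)) θ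

/-- The pseudohyperbolic-type disk `𝔻(z) = {w ∈ 𝔻 : |w - z| ≤ (1-r)/2}` at `z = re^{iθ}`. -/
def diskAt (r θ : ℝ) : Set ℂ :=
  Metric.closedBall ((r : ℂ) * circ θ) ((1 - r) / 2) ∩ Metric.ball 0 1

/-- `z = re^{iθ} ∈ 𝕂_h`. -/
def inK (h : ℝ → ℝ) (r θ : ℝ) : Prop :=
  θ ∈ ThSet h ∧ 2 * h θ ≤ ⨆ w ∈ diskAt r θ, ‖outer h w‖

/-- `z = re^{iθ} ∈ 𝕃_h = 𝔻_h \ 𝕂_h`. -/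
def inL (h : ℝ → ℝ) (r θ : ℝ) : Prop := θ ∈ ThSet h ∧ ¬ inK h r θ

/-- `ρ_{h,λ}(θ) = min{μ_h(θ), 2 a_{h,λ}(θ)⁻¹}` (in `ℝ≥0∞`). -/
def rhoH (h lam : ℝ → ℝ) (θ : ℝ) : ℝ≥0∞ :=
  min (ENNReal.ofReal (muH h θ)) (2 / aH h (lam θ) θ)

/-- `z = re^{iθ} ∈ 𝕃¹_{h,λ}`. -/
def inL1 (h lam : ℝ → ℝ) (r θ : ℝ) : Prop :=
  inL h r θ ∧ ENNReal.ofReal r ≤ 1 - rhoH h lam θ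

/-- `z = re^{iθ} ∈ 𝕃²_{h,λ}`. -/
def inL2 (h lam : ℝ → ℝ) (r θ : ℝ) : Prop :=
  inL h r θ ∧ 1 - rhoH h lam θ ≤ ENNReal.ofReal r

/-- `z = re^{iθ} ∈ 𝕄_h` (with `0 ≤ r < 1` imposed by the integration domain). -/
def inM (h : ℝ → ℝ) (r θ : ℝ) : Prop := θ ∈ ThSet h ∧ 1 - muH h θ ≤ r

/-- The kernel `Q(e^{iφ}, re^{iθ})`. -/
def Qker (r θ φ : ℝ) : ℝ :=
  r * (2 * (1 - r) ^ 2 - ‖circ θ - circ φ‖ ^ 2 * (1 + r ^ 2)) /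
    ‖circ φ - (r : ℂ) * circ θ‖ ^ 4

/-- The function `h_β` of the example, with `γ = π e^{2β/α}`. -/
def hBeta (α β : ℝ) (θ : ℝ) : ℝ :=
  if 0 < θ then θ ^ (-(α / 2)) * Real.log (π * Real.exp (2 * β / α) / θ) ^ (-β)
  else π ^ (-(α / 2)) * Real.log (π * Real.exp (2 * β / α) / π) ^ (-β)

/-- `𝒞_α(h)`. -/
def Cint (α : ℝ) (h : ℝ → ℝ) : ℝ≥0∞ :=
  ∫⁻ θ in Ioc (-π) π, ∫⁻ φ in Ioc (-π) π,
    ENNReal.ofReal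
      (((h φ) ^ 2 - (h θ) ^ 2) * Real.log (h φ / h θ) / ‖circ φ - circ θ‖ ^ (2 - α))

/-- The integral `(1/2π) ∫_𝔻 |O_h(z)|² (∂v_h/∂θ)(z) dA_α(z)`. -/
def Aint (α : ℝ) (h : ℝ → ℝ) : ℝ :=
  (2 * π)⁻¹ * ∫ θ in Ioc (-π) π, ∫ r in Ico (0 : ℝ) 1,
    α * (1 - r) ^ (α - 1) * (‖outer h ((r : ℂ) * circ θ)‖ ^ 2 * dvTheta h r θ)

/-- `∫_{𝕄_h} h²(θ) (∫_{φ ∈ 𝕋_h^-(θ), |e^{iφ}-e^{iθ}| ≤ μ_h(θ)} Q(e^{iφ},z) log(h(φ)/h(θ)) dφ) dA_α(z)`. -/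
def MQint (α : ℝ) (h : ℝ → ℝ) : ℝ :=
  ∫ θ in Ioc (-π) π, ∫ r in Ico (0 : ℝ) 1,
    {r : ℝ | inM h r θ}.indicator
      (fun r => α * (1 - r) ^ (α - 1) * ((h θ) ^ 2 *
        ∫ φ in Ioc (-π) π,
          {φ : ℝ | h φ ≤ h θ / 2 ∧ ‖circ φ - circ θ‖ ≤ muH h θ}.indicator
            (fun φ => Qker r θ φ * Real.log (h φ / h θ)) φ)) r

/-- `∫_{𝕄_h} h²(θ) (∂v_h/∂θ)(z) dA_α(z)`. -/
def MVint (α : ℝ) (h : ℝ → ℝ) : ℝ :=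
  ∫ θ in Ioc (-π) π, ∫ r in Ico (0 : ℝ) 1,
    {r : ℝ | inM h r θ}.indicator
      (fun r => α * (1 - r) ^ (α - 1) * ((h θ) ^ 2 * dvTheta h r θ)) r


section Aux



lemma circ_periodic : Function.Periodic circ (2 * π) := by
  intro t
  unfold circ
  push_cast
  rw [add_mul, Complex.exp_add, Complex.exp_two_pi_mul_I, mul_one]

lemma norm_circ_sub_sq (r θ φ : ℝ) :
    ‖circ φ - (r : ℂ) * circ θ‖ ^ 2 = (1 - r) ^ 2 + 2 * r * (1 - Real.cos (φ - θ)) := by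
  have h1 : ‖circ φ - (r : ℂ) * circ θ‖ ^ 2 = Complex.normSq (circ φ - (r : ℂ) * circ θ) := by
    rw [Complex.sq_norm]
  rw [h1, Complex.normSq_apply]
  have hre : (circ φ - (r : ℂ) * circ θ).re = Real.cos φ - r * Real.cos θ := by
    simp [circ, Complex.exp_ofReal_mul_I_re, Complex.exp_ofReal_mul_I_im]
  have him : (circ φ - (r : ℂ) * circ θ).im = Real.sin φ - r * Real.sin θ := by
    simp [circ, Complex.exp_ofReal_mul_I_re, Complex.exp_ofReal_mul_I_im]
  rw [hre, him, Real.cos_sub]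
  have h2 := Real.sin_sq_add_cos_sq φ
  have h3 := Real.sin_sq_add_cos_sq θ
  linear_combination h2 + r ^ 2 * h3

lemma one_sub_cos_ge {u : ℝ} (hu : |u| ≤ π) : 2 * u ^ 2 / π ^ 2 ≤ 1 - Real.cos u := by
  have hs : Real.sin (u / 2) ^ 2 = (1 - Real.cos u) / 2 := by
    have := Real.cos_sq (u / 2)
    have h2 : Real.sin (u/2) ^ 2 = 1 - Real.cos (u/2) ^ 2 := Real.sin_sq _
    rw [h2, this]
    rw [show 2 * (u / 2) = u by ring]
    ring
  have habs : |u| / 2 ≤ π / 2 := by linarith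
  have h0 : 0 ≤ |u| / 2 := by positivity
  have hsin := Real.mul_le_sin h0 habs
  have hsq : (2 / π * (|u| / 2)) ^ 2 ≤ Real.sin (|u| / 2) ^ 2 :=
    pow_le_pow_left₀ (by positivity) hsin 2
  have heq : Real.sin (|u| / 2) ^ 2 = Real.sin (u / 2) ^ 2 := by
    rcases abs_cases u with ⟨h, _⟩ | ⟨h, _⟩
    · rw [h]
    · rw [h, show -u / 2 = -(u/2) by ring, Real.sin_neg]; ring
  have hpi := Real.pi_pos
  have h5 : (2 / π * (|u| / 2)) ^ 2 = u ^ 2 / π ^ 2 := by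
    rw [mul_pow, div_pow, div_pow, sq_abs]
    field_simp
  rw [show 2 * u ^ 2 / π ^ 2 = 2 * (u ^ 2 / π ^ 2) by ring]
  rw [h5] at hsq
  rw [heq, hs] at hsq
  linarith

lemma kernel_ub {r θ φ : ℝ} (hr : 1/2 ≤ r) (hr1 : r < 1) (hu : |φ - θ| ≤ π) :
    (1 - r ^ 2) / ‖circ φ - (r : ℂ) * circ θ‖ ^ 2
      ≤ π ^ 2 * (1 - r) / ((1 - r) ^ 2 + (φ - θ) ^ 2) := by
  have hpi := Real.pi_pos
  have hcos := one_sub_cos_ge hu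
  have hcos1 := Real.cos_le_one (φ - θ)
  have hden : (2 / π ^ 2) * ((1 - r) ^ 2 + (φ - θ) ^ 2)
      ≤ ‖circ φ - (r : ℂ) * circ θ‖ ^ 2 := by
    rw [norm_circ_sub_sq]
    have h2 : 2 * (φ - θ) ^ 2 / π ^ 2 ≤ 2 * r * (1 - Real.cos (φ - θ)) := by
      have : 1 * (1 - Real.cos (φ - θ)) ≤ 2 * r * (1 - Real.cos (φ - θ)) := by
        apply mul_le_mul_of_nonneg_right (by linarith) (by linarith)
      calc 2 * (φ - θ) ^ 2 / π ^ 2 ≤ 1 - Real.cos (φ - θ) := hcos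
        _ ≤ 2 * r * (1 - Real.cos (φ - θ)) := by linarith
    have h3 : (2 / π ^ 2) * (1 - r) ^ 2 ≤ (1 - r) ^ 2 := by
      have hp2 : (2:ℝ) / π ^ 2 ≤ 1 := by
        rw [div_le_one (by positivity)]
        nlinarith [Real.pi_gt_three]
      nlinarith [sq_nonneg (1 - r)]
    calc (2 / π ^ 2) * ((1 - r) ^ 2 + (φ - θ) ^ 2)
        = (2 / π ^ 2) * (1 - r) ^ 2 + 2 * (φ - θ) ^ 2 / π ^ 2 := by ring
      _ ≤ (1 - r) ^ 2 + 2 * r * (1 - Real.cos (φ - θ)) := by linarith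
  have hD : (0:ℝ) < (1 - r) ^ 2 + (φ - θ) ^ 2 := by
    have h1r : (0:ℝ) < (1 - r) ^ 2 := pow_pos (by linarith) 2
    nlinarith [sq_nonneg (φ - θ)]
  have hdpos : (0:ℝ) < (2 / π ^ 2) * ((1 - r) ^ 2 + (φ - θ) ^ 2) :=
    mul_pos (by positivity) hD
  have hnum : 1 - r ^ 2 ≤ 2 * (1 - r) := by nlinarith
  calc (1 - r ^ 2) / ‖circ φ - (r : ℂ) * circ θ‖ ^ 2
      ≤ (2 * (1 - r)) / ((2 / π ^ 2) * ((1 - r) ^ 2 + (φ - θ) ^ 2)) := by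
        apply div_le_div₀ (by linarith) hnum hdpos hden
    _ = π ^ 2 * (1 - r) / ((1 - r) ^ 2 + (φ - θ) ^ 2) := by
        rw [div_eq_div_iff hdpos.ne' hD.ne']
        field_simp



lemma lintegral_Ioc_translate (f : ℝ → ℝ≥0∞) (a b c : ℝ) :
    ∫⁻ x in Ioc (a + c) (b + c), f x = ∫⁻ x in Ioc a b, f (x + c) := by
  have hmp : MeasurePreserving (· + c) (volume : Measure ℝ) volume :=
    measurePreserving_add_right volume c
  have hemb : MeasurableEmbedding (· + c : ℝ → ℝ) :=
    (MeasurableEquiv.addRight c).measurableEmbedding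
  have hpre : ((· + c) : ℝ → ℝ) ⁻¹' (Ioc (a + c) (b + c)) = Ioc a b := by
    ext x; simp [add_le_add_iff_right]
  rw [← hmp.setLIntegral_comp_preimage_emb hemb f (Ioc (a + c) (b + c)), hpre]

lemma lintegral_Ioc_per_aux (f : ℝ → ℝ≥0∞) (hper : ∀ x, f (x + 2 * π) = f x)
    {a b : ℝ} (h1 : a ≤ b) (h2 : b ≤ a + 2 * π) :
    ∫⁻ x in Ioc a (a + 2 * π), f x = ∫⁻ x in Ioc b (b + 2 * π), f x := by
  have hsplit1 : Ioc a (a + 2 * π) = Ioc a b ∪ Ioc b (a + 2 * π) :=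
    (Ioc_union_Ioc_eq_Ioc h1 h2).symm
  have hsplit2 : Ioc b (b + 2 * π) = Ioc b (a + 2 * π) ∪ Ioc (a + 2 * π) (b + 2 * π) :=
    (Ioc_union_Ioc_eq_Ioc h2 (by linarith)).symm
  have hd1 : Disjoint (Ioc a b) (Ioc b (a + 2 * π)) := Ioc_disjoint_Ioc_of_le le_rfl
  have hd2 : Disjoint (Ioc b (a + 2 * π)) (Ioc (a + 2 * π) (b + 2 * π)) := Ioc_disjoint_Ioc_of_le le_rfl
  rw [hsplit1, hsplit2, lintegral_union measurableSet_Ioc hd1,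
    lintegral_union measurableSet_Ioc hd2]
  have htr : ∫⁻ x in Ioc (a + 2 * π) (b + 2 * π), f x = ∫⁻ x in Ioc a b, f x := by
    rw [lintegral_Ioc_translate f a b (2 * π)]
    congr 1
    ext x
    exact hper x
  rw [htr]
  ring

/-- Periodic shift: for `θ ∈ Ioc (-π) π`,
`∫⁻ over Ioc (-π) π = ∫⁻ over Ioc (θ - π) (θ + π)` for a `2π`-periodic integrand. -/
lemma lintegral_Ioc_center (f : ℝ → ℝ≥0∞) (hper : ∀ x, f (x + 2 * π) = f x)
    {θ : ℝ} (hθ : θ ∈ Ioc (-π) π) :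
    ∫⁻ x in Ioc (-π) π, f x = ∫⁻ x in Ioc (θ - π) (θ + π), f x := by
  have hpi := Real.pi_pos
  obtain ⟨hθ1, hθ2⟩ := hθ
  rcases le_total 0 θ with h | h
  · have := lintegral_Ioc_per_aux f hper (a := -π) (b := θ - π)
      (by linarith) (by linarith)
    rw [show -π + 2 * π = π by ring] at this
    rw [show θ - π + 2 * π = θ + π by ring] at this
    exact this
  · have := lintegral_Ioc_per_aux f hper (a := θ - π) (b := -π)
      (by linarith) (by linarith)
    rw [show -π + 2 * π = π by ring] at this
    rw [show θ - π + 2 * π = θ + π by ring] at this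
    exact this.symm

lemma measurable_toIocMod' : Measurable (toIocMod Real.two_pi_pos (-π)) := by
  have : (toIocMod Real.two_pi_pos (-π)) = fun b =>
      b + (⌊(-π + 2 * π - b) / (2 * π)⌋ : ℝ) * (2 * π) := by
    funext b
    rw [toIocMod, toIocDiv_eq_neg_floor]
    simp only [zsmul_eq_mul, Int.cast_neg]
    push_cast
    ring
  rw [this]
  apply measurable_id.add
  apply Measurable.mul _ measurable_const
  have hfloor : Measurable (fun b : ℝ => ⌊(-π + 2 * π - b) / (2 * π)⌋) :=
    ((measurable_const.sub measurable_id).div_const _).floor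
  exact measurable_from_top.comp hfloor



section calc1
variable {s : ℝ}

lemma hasDerivAt_negInv (hs : 0 < s) (t : ℝ) :
    HasDerivAt (fun t : ℝ => -s / (s ^ 2 + t ^ 2)) (2 * s * t / (s ^ 2 + t ^ 2) ^ 2) t := by
  have hne : s ^ 2 + t ^ 2 ≠ 0 := by positivity
  have hd : HasDerivAt (fun t : ℝ => s ^ 2 + t ^ 2) (2 * t) t := by
    simpa using (hasDerivAt_pow 2 t).const_add (s ^ 2)
  have := (hasDerivAt_const t (-s)).div hd hne
  refine this.congr_deriv ?_
  ring

lemma tendsto_negInv_atTop (hs : 0 < s) :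
    Tendsto (fun t : ℝ => -s / (s ^ 2 + t ^ 2)) atTop (nhds 0) := by
  have h1 : Tendsto (fun t : ℝ => s ^ 2 + t ^ 2) atTop atTop :=
    tendsto_atTop_add_const_left _ _ (tendsto_pow_atTop two_ne_zero)
  have h2 : Tendsto (fun t : ℝ => (s ^ 2 + t ^ 2)⁻¹) atTop (nhds 0) := h1.inv_tendsto_atTop
  have := h2.const_mul (-s)
  simpa [div_eq_mul_inv] using this

lemma integral_w_Ioi (hs : 0 < s) {a : ℝ} (ha : 0 ≤ a) :
    ∫ t in Ioi a, 2 * s * t / (s ^ 2 + t ^ 2) ^ 2 = s / (s ^ 2 + a ^ 2) := by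
  have := integral_Ioi_of_hasDerivAt_of_nonneg' (a := a)
    (g := fun t : ℝ => -s / (s ^ 2 + t ^ 2)) (g' := fun t => 2 * s * t / (s ^ 2 + t ^ 2) ^ 2)
    (fun x _ => hasDerivAt_negInv hs x)
    (fun x hx => by
      have : (0:ℝ) ≤ x := le_trans ha (le_of_lt hx)
      positivity)
    (tendsto_negInv_atTop hs)
  rw [this]
  field_simp
  ring

lemma integrableOn_w_Ioi (hs : 0 < s) {a : ℝ} (ha : 0 ≤ a) :
    IntegrableOn (fun t => 2 * s * t / (s ^ 2 + t ^ 2) ^ 2) (Ioi a) := by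
  exact integrableOn_Ioi_deriv_of_nonneg' (g := fun t : ℝ => -s / (s ^ 2 + t ^ 2))
    (fun x _ => hasDerivAt_negInv hs x)
    (fun x hx => by
      have : (0:ℝ) ≤ x := le_trans ha (le_of_lt hx)
      positivity)
    (tendsto_negInv_atTop hs)

lemma hasDerivAt_F (hs : 0 < s) (t : ℝ) :
    HasDerivAt (fun t : ℝ => Real.arctan (t / s) - s * t / (s ^ 2 + t ^ 2))
      (2 * s * t ^ 2 / (s ^ 2 + t ^ 2) ^ 2) t := by
  have hne : s ^ 2 + t ^ 2 ≠ 0 := by positivity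
  have h1 : HasDerivAt (fun t : ℝ => Real.arctan (t / s))
      ((1 / (1 + (t / s) ^ 2)) * (1 / s)) t := by
    have := (Real.hasDerivAt_arctan (t / s)).comp t ((hasDerivAt_id t).div_const s)
    simpa [one_div, Function.comp_def] using this
  have hd : HasDerivAt (fun t : ℝ => s ^ 2 + t ^ 2) (2 * t) t := by
    simpa using (hasDerivAt_pow 2 t).const_add (s ^ 2)
  have h2 : HasDerivAt (fun t : ℝ => s * t / (s ^ 2 + t ^ 2))
      ((s * (s ^ 2 + t ^ 2) - s * t * (2 * t)) / (s ^ 2 + t ^ 2) ^ 2) t := by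
    have hn : HasDerivAt (fun t : ℝ => s * t) s t := by
      simpa using (hasDerivAt_id t).const_mul s
    exact hn.div hd hne
  refine (h1.sub h2).congr_deriv ?_
  have hs2 : (1 : ℝ) + (t / s) ^ 2 = (s ^ 2 + t ^ 2) / s ^ 2 := by
    field_simp
  field_simp
  ring

lemma tendsto_F_atTop (hs : 0 < s) :
    Tendsto (fun t : ℝ => Real.arctan (t / s) - s * t / (s ^ 2 + t ^ 2)) atTop (nhds (π / 2)) := by
  have h1 : Tendsto (fun t : ℝ => Real.arctan (t / s)) atTop (nhds (π / 2)) := by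
    have hdiv : Tendsto (fun t : ℝ => t / s) atTop atTop := tendsto_id.atTop_div_const hs
    exact (Real.tendsto_arctan_atTop.mono_right nhdsWithin_le_nhds).comp hdiv
  have h2 : Tendsto (fun t : ℝ => s * t / (s ^ 2 + t ^ 2)) atTop (nhds 0) := by
    have hub : Tendsto (fun t : ℝ => s * t⁻¹) atTop (nhds 0) := by
      simpa using tendsto_inv_atTop_zero.const_mul s
    apply tendsto_of_tendsto_of_tendsto_of_le_of_le' (tendsto_const_nhds (x := (0:ℝ))) hub
    · filter_upwards [eventually_gt_atTop 0] with t ht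
      positivity
    · filter_upwards [eventually_gt_atTop 0] with t ht
      rw [div_le_iff₀ (by positivity), inv_eq_one_div]
      have heq : s * (1 / t) * (s ^ 2 + t ^ 2) = s * (s ^ 2 / t) + s * t := by
        field_simp
      rw [heq]
      have : 0 ≤ s * (s ^ 2 / t) :=
        mul_nonneg (le_of_lt hs) (div_nonneg (sq_nonneg s) (le_of_lt ht))
      linarith
  have := h1.sub h2
  simpa using this

lemma integral_wt_Ioi (hs : 0 < s) :
    ∫ t in Ioi (0:ℝ), 2 * s * t ^ 2 / (s ^ 2 + t ^ 2) ^ 2 = π / 2 := by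
  have := integral_Ioi_of_hasDerivAt_of_nonneg' (a := (0:ℝ))
    (g := fun t : ℝ => Real.arctan (t / s) - s * t / (s ^ 2 + t ^ 2))
    (g' := fun t => 2 * s * t ^ 2 / (s ^ 2 + t ^ 2) ^ 2)
    (fun x _ => hasDerivAt_F hs x)
    (fun x hx => by positivity)
    (tendsto_F_atTop hs)
  rw [this]
  simp

lemma integrableOn_wt_Ioi (hs : 0 < s) :
    IntegrableOn (fun t => 2 * s * t ^ 2 / (s ^ 2 + t ^ 2) ^ 2) (Ioi (0:ℝ)) :=
  integrableOn_Ioi_deriv_of_nonneg'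
    (g := fun t : ℝ => Real.arctan (t / s) - s * t / (s ^ 2 + t ^ 2))
    (fun x _ => hasDerivAt_F hs x)
    (fun x hx => by positivity)
    (tendsto_F_atTop hs)

end calc1



lemma lintegral_w_Ioi {s : ℝ} (hs : 0 < s) {a : ℝ} (ha : 0 ≤ a) :
    ∫⁻ t in Ioi a, ENNReal.ofReal (2 * s * t / (s ^ 2 + t ^ 2) ^ 2)
      = ENNReal.ofReal (s / (s ^ 2 + a ^ 2)) := by
  rw [← integral_w_Ioi hs ha, ← ofReal_integral_eq_lintegral_ofReal (integrableOn_w_Ioi hs ha)]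
  filter_upwards [ae_restrict_mem measurableSet_Ioi] with t ht
  have h0 : (0:ℝ) ≤ t := le_trans ha (le_of_lt ht)
  positivity

lemma lintegral_wt_Ioi {s : ℝ} (hs : 0 < s) :
    ∫⁻ t in Ioi (0:ℝ), ENNReal.ofReal (2 * s * t ^ 2 / (s ^ 2 + t ^ 2) ^ 2)
      = ENNReal.ofReal (π / 2) := by
  rw [← integral_wt_Ioi hs, ← ofReal_integral_eq_lintegral_ofReal (integrableOn_wt_Ioi hs)]
  filter_upwards [ae_restrict_mem measurableSet_Ioi] with t ht
  have h0 : (0:ℝ) ≤ t := le_of_lt ht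
  positivity

lemma poisson_bound (g : ℝ → ℝ≥0∞) (hg : Measurable g) (θ s t₀ ε M : ℝ)
    (hs : 0 < s) (ht₀ : 0 < t₀) (hε : 0 ≤ ε) (hM : 0 ≤ M)
    (hA : ∀ t, 0 < t → t ≤ t₀ →
      ∫⁻ u in Metric.closedBall θ t, g u ≤ ENNReal.ofReal (ε * t))
    (hMb : ∫⁻ u in Metric.closedBall θ π, g u ≤ ENNReal.ofReal M) :
    ∫⁻ u in Ioc (θ - π) (θ + π), ENNReal.ofReal (s / (s ^ 2 + (u - θ) ^ 2)) * g u
      ≤ ENNReal.ofReal (ε * (π / 2)) + ENNReal.ofReal (M * (s / t₀ ^ 2)) := by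
  have hpi := Real.pi_pos
  set W : ℝ → ℝ≥0∞ := fun t => ENNReal.ofReal (2 * s * t / (s ^ 2 + t ^ 2) ^ 2) with hW
  have hWmeas : Measurable W := by
    apply Measurable.ennreal_ofReal
    apply Measurable.div
    · exact (measurable_const.mul measurable_id)
    · exact ((measurable_const.add (measurable_id.pow_const 2)).pow_const 2)
  -- step 0 : enlarge domain to the closed ball
  have step0 : ∫⁻ u in Ioc (θ - π) (θ + π), ENNReal.ofReal (s / (s ^ 2 + (u - θ) ^ 2)) * g u
      ≤ ∫⁻ u in Metric.closedBall θ π, ENNReal.ofReal (s / (s ^ 2 + (u - θ) ^ 2)) * g u := by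
    apply lintegral_mono_set
    rw [Real.closedBall_eq_Icc]
    exact Ioc_subset_Icc_self
  -- step 1-2 : kernel as an integral
  have hker : ∀ u : ℝ, ENNReal.ofReal (s / (s ^ 2 + (u - θ) ^ 2))
      = ∫⁻ t in Ioi (0:ℝ), (Ioi |u - θ|).indicator W t := by
    intro u
    have h1 : ∫⁻ t in Ioi (0:ℝ), (Ioi |u - θ|).indicator W t
        = ∫⁻ t in Ioi |u - θ|, W t := by
      rw [← lintegral_indicator measurableSet_Ioi, ← lintegral_indicator measurableSet_Ioi,
        indicator_indicator, inter_eq_right.mpr (Ioi_subset_Ioi (abs_nonneg _))]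
    rw [h1, hW, lintegral_w_Ioi hs (abs_nonneg _), sq_abs]
  -- the joint kernel
  set K : ℝ × ℝ → ℝ≥0∞ :=
    fun p => ({p : ℝ × ℝ | |p.1 - θ| < p.2}).indicator (fun p => W p.2 * g p.1) p with hK
  have hKmeas : Measurable K := by
    apply Measurable.indicator
    · exact (hWmeas.comp measurable_snd).mul (hg.comp measurable_fst)
    · have : IsOpen {p : ℝ × ℝ | |p.1 - θ| < p.2} :=
        isOpen_lt ((continuous_fst.sub continuous_const).abs) continuous_snd
      exact this.measurableSet
  have hKu : ∀ u t : ℝ, K (u, t) = (Ioi |u - θ|).indicator (fun t => W t * g u) t := by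
    intro u t
    by_cases h : |u - θ| < t
    · rw [hK]; simp only [indicator]
      rw [if_pos (by exact h), if_pos (by exact h)]
    · rw [hK]; simp only [indicator]
      rw [if_neg (by exact h), if_neg (by exact h)]
  have step1 : ∫⁻ u in Metric.closedBall θ π, ENNReal.ofReal (s / (s ^ 2 + (u - θ) ^ 2)) * g u
      = ∫⁻ u in Metric.closedBall θ π, ∫⁻ t in Ioi (0:ℝ), K (u, t) := by
    apply lintegral_congr
    intro u
    rw [hker u]
    rw [← lintegral_mul_const _ (hWmeas.indicator measurableSet_Ioi)]
    apply lintegral_congr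
    intro t
    rw [hKu u t]
    by_cases h : t ∈ Ioi |u - θ|
    · rw [indicator_of_mem h, indicator_of_mem h]
    · rw [indicator_of_notMem h, indicator_of_notMem h, zero_mul]
  have step2 : ∫⁻ u in Metric.closedBall θ π, ∫⁻ t in Ioi (0:ℝ), K (u, t)
      = ∫⁻ t in Ioi (0:ℝ), ∫⁻ u in Metric.closedBall θ π, K (u, t) := by
    apply lintegral_lintegral_swap
    exact (hKmeas.comp measurable_id).aemeasurable
  -- inner integral bound
  have hBmono : ∀ t : ℝ, 0 < t → ∫⁻ u in Metric.closedBall θ π, K (u, t)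
      ≤ W t * ∫⁻ u in Metric.closedBall θ (min t π), g u := by
    intro t ht
    have hKut : ∀ u, K (u, t) = (Metric.ball θ t).indicator (fun u => W t * g u) u := by
      intro u
      rw [hK]; simp only [indicator]
      have : (u ∈ Metric.ball θ t) ↔ |u - θ| < t := by
        rw [Metric.mem_ball, Real.dist_eq]
      by_cases h : |u - θ| < t
      · rw [if_pos (by exact h), if_pos (this.mpr h)]
      · rw [if_neg (by exact h), if_neg (fun hc => h (this.mp hc))]
    have hrw : ∫⁻ u in Metric.closedBall θ π, K (u, t)
        = ∫⁻ u in Metric.ball θ t ∩ Metric.closedBall θ π, W t * g u := by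
      rw [show ∫⁻ u in Metric.closedBall θ π, K (u, t)
          = ∫⁻ u in Metric.closedBall θ π,
              (Metric.ball θ t).indicator (fun u => W t * g u) u from
        lintegral_congr fun u => by rw [hKut u]]
      rw [lintegral_indicator Metric.isOpen_ball.measurableSet,
        Measure.restrict_restrict Metric.isOpen_ball.measurableSet]
    rw [hrw, lintegral_const_mul _ hg]
    apply mul_le_mul_right
    apply lintegral_mono_set
    intro u hu
    rw [Metric.mem_closedBall]
    rcases hu with ⟨h1, h2⟩
    rw [Metric.mem_ball] at h1
    rw [Metric.mem_closedBall] at h2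
    exact le_min (le_of_lt h1) h2
  -- split the ouver integral
  have hsplit : ∫⁻ t in Ioi (0:ℝ), ∫⁻ u in Metric.closedBall θ π, K (u, t)
      ≤ ENNReal.ofReal (ε * (π / 2)) + ENNReal.ofReal (M * (s / t₀ ^ 2)) := by
    have hIoi : Ioi (0:ℝ) = Ioc 0 t₀ ∪ Ioi t₀ := (Ioc_union_Ioi_eq_Ioi (le_of_lt ht₀)).symm
    rw [hIoi, lintegral_union measurableSet_Ioi Ioc_disjoint_Ioi_same]
    have hpiece1 : ∫⁻ t in Ioc (0:ℝ) t₀, ∫⁻ u in Metric.closedBall θ π, K (u, t)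
        ≤ ENNReal.ofReal (ε * (π / 2)) := by
      have hb : ∀ t ∈ Ioc (0:ℝ) t₀, ∫⁻ u in Metric.closedBall θ π, K (u, t)
          ≤ ENNReal.ofReal ε * ENNReal.ofReal (2 * s * t ^ 2 / (s ^ 2 + t ^ 2) ^ 2) := by
        intro t ht
        rcases ht with ⟨ht1, ht2⟩
        have hmin : 0 < min t π := lt_min ht1 hpi
        have h1 : ∫⁻ u in Metric.closedBall θ (min t π), g u ≤ ENNReal.ofReal (ε * t) := by
          calc ∫⁻ u in Metric.closedBall θ (min t π), g u
              ≤ ENNReal.ofReal (ε * min t π) := hA _ hmin (le_trans (min_le_left _ _) ht2)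
            _ ≤ ENNReal.ofReal (ε * t) := by
                apply ENNReal.ofReal_le_ofReal
                exact mul_le_mul_of_nonneg_left (min_le_left _ _) hε
        calc ∫⁻ u in Metric.closedBall θ π, K (u, t)
            ≤ W t * ∫⁻ u in Metric.closedBall θ (min t π), g u := hBmono t ht1
          _ ≤ W t * ENNReal.ofReal (ε * t) := mul_le_mul_right h1 _
          _ = ENNReal.ofReal ε * ENNReal.ofReal (2 * s * t ^ 2 / (s ^ 2 + t ^ 2) ^ 2) := by
              rw [hW]
              rw [← ENNReal.ofReal_mul (by positivity), ← ENNReal.ofReal_mul hε]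
              congr 1
              have hne : (s ^ 2 + t ^ 2) ^ 2 ≠ 0 := by positivity
              field_simp
      calc ∫⁻ t in Ioc (0:ℝ) t₀, ∫⁻ u in Metric.closedBall θ π, K (u, t)
          ≤ ∫⁻ t in Ioc (0:ℝ) t₀,
              ENNReal.ofReal ε * ENNReal.ofReal (2 * s * t ^ 2 / (s ^ 2 + t ^ 2) ^ 2) := by
            apply setLIntegral_mono' measurableSet_Ioc hb
        _ ≤ ENNReal.ofReal ε * ∫⁻ t in Ioi (0:ℝ),
              ENNReal.ofReal (2 * s * t ^ 2 / (s ^ 2 + t ^ 2) ^ 2) := by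
            rw [lintegral_const_mul _ (by
              apply Measurable.ennreal_ofReal
              apply Measurable.div
              · exact measurable_const.mul (measurable_id.pow_const 2)
              · exact ((measurable_const.add (measurable_id.pow_const 2)).pow_const 2))]
            apply mul_le_mul_right
            apply lintegral_mono_set
            exact Ioc_subset_Ioi_self
        _ = ENNReal.ofReal ε * ENNReal.ofReal (π / 2) := by rw [lintegral_wt_Ioi hs]
        _ = ENNReal.ofReal (ε * (π / 2)) := by rw [← ENNReal.ofReal_mul hε]
    have hpiece2 : ∫⁻ t in Ioi t₀, ∫⁻ u in Metric.closedBall θ π, K (u, t)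
        ≤ ENNReal.ofReal (M * (s / t₀ ^ 2)) := by
      have hb : ∀ t ∈ Ioi t₀, ∫⁻ u in Metric.closedBall θ π, K (u, t)
          ≤ ENNReal.ofReal M * W t := by
        intro t ht
        rw [mem_Ioi] at ht
        have ht1 : 0 < t := lt_trans ht₀ ht
        calc ∫⁻ u in Metric.closedBall θ π, K (u, t)
            ≤ W t * ∫⁻ u in Metric.closedBall θ (min t π), g u := hBmono t ht1
          _ ≤ W t * ENNReal.ofReal M := by
              apply mul_le_mul_right
              refine le_trans ?_ hMb
              apply lintegral_mono_set
              apply Metric.closedBall_subset_closedBall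
              exact min_le_right _ _
          _ = ENNReal.ofReal M * W t := mul_comm _ _
      calc ∫⁻ t in Ioi t₀, ∫⁻ u in Metric.closedBall θ π, K (u, t)
          ≤ ∫⁻ t in Ioi t₀, ENNReal.ofReal M * W t :=
            setLIntegral_mono' measurableSet_Ioi hb
        _ = ENNReal.ofReal M * ∫⁻ t in Ioi t₀, W t := lintegral_const_mul _ hWmeas
        _ = ENNReal.ofReal M * ENNReal.ofReal (s / (s ^ 2 + t₀ ^ 2)) := by
            rw [hW, lintegral_w_Ioi hs (le_of_lt ht₀)]
        _ ≤ ENNReal.ofReal M * ENNReal.ofReal (s / t₀ ^ 2) := by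
            apply mul_le_mul_right
            apply ENNReal.ofReal_le_ofReal
            apply div_le_div_of_nonneg_left (le_of_lt hs) (by positivity)
            nlinarith [sq_nonneg s]
        _ = ENNReal.ofReal (M * (s / t₀ ^ 2)) := by rw [← ENNReal.ofReal_mul hM]
    exact add_le_add hpiece1 hpiece2
  calc ∫⁻ u in Ioc (θ - π) (θ + π), ENNReal.ofReal (s / (s ^ 2 + (u - θ) ^ 2)) * g u
      ≤ ∫⁻ u in Metric.closedBall θ π, ENNReal.ofReal (s / (s ^ 2 + (u - θ) ^ 2)) * g u := step0
    _ = ∫⁻ t in Ioi (0:ℝ), ∫⁻ u in Metric.closedBall θ π, K (u, t) := by rw [step1, step2]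
    _ ≤ ENNReal.ofReal (ε * (π / 2)) + ENNReal.ofReal (M * (s / t₀ ^ 2)) := hsplit



lemma lintegral_Ioc_period (f : ℝ → ℝ≥0∞) (hper : ∀ x, f (x + 2 * π) = f x) (b : ℝ) :
    ∫⁻ x in Ioc b (b + 2 * π), f x = ∫⁻ x in Ioc (-π) π, f x := by
  have hp : Function.Periodic f (2 * π) := hper
  set n := toIocDiv Real.two_pi_pos (-π) b with hn
  set c := toIocMod Real.two_pi_pos (-π) b with hc
  have hcb : c = b - n • (2 * π) := by rw [hc, hn, toIocMod]
  have hmem := toIocMod_mem_Ioc Real.two_pi_pos (-π) b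
  rw [← hc] at hmem
  have hzs : ∀ x : ℝ, f (x + n • (2 * π)) = f x := fun x => (hp.zsmul n) x
  have hb2 : b = c + n • (2 * π) := by rw [hcb]; ring
  have hb3 : b + 2 * π = (c + 2 * π) + n • (2 * π) := by rw [hcb]; ring
  have hset : Ioc b (b + 2 * π) = Ioc (c + n • (2 * π)) ((c + 2 * π) + n • (2 * π)) := by
    rw [hb2]; congr 1; ring
  rw [hset, lintegral_Ioc_translate f c (c + 2 * π) (n • (2 * π))]
  have h4 : ∫⁻ x in Ioc c (c + 2 * π), f (x + n • (2 * π)) = ∫⁻ x in Ioc c (c + 2 * π), f x :=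
    lintegral_congr fun x => hzs x
  rw [h4]
  have h5 := lintegral_Ioc_per_aux f hper (a := -π) (b := c)
    (le_of_lt hmem.1) hmem.2
  rw [show -π + 2 * π = π by ring] at h5
  exact h5.symm

lemma ae_tendsto_average_closedBall (g : ℝ → ℝ) (hg : LocallyIntegrable g volume) :
    ∀ᵐ θ : ℝ, Tendsto (fun t => ⨍ u in Metric.closedBall θ t, g u) (𝓝[>] 0) (𝓝 (g θ)) := by
  filter_upwards [IsUnifLocDoublingMeasure.ae_tendsto_average (μ := (volume : Measure ℝ)) hg 1]
    with θ hθ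
  refine hθ (fun _ => θ) id tendsto_id ?_
  filter_upwards [self_mem_nhdsWithin] with t ht
  rw [Metric.mem_closedBall, dist_self, one_mul]
  exact le_of_lt ht

lemma periodic_locallyIntegrable {g : ℝ → ℝ} (hm : Measurable g)
    (hper : ∀ x, g (x + 2 * π) = g x) (hint : IntegrableOn g (Ioc (-π) π) volume) :
    LocallyIntegrable g volume := by
  have hpi := Real.pi_pos
  -- finite integral over any period interval
  have key : ∀ b : ℝ, IntegrableOn g (Ioc b (b + 2 * π)) volume := by
    intro b
    constructor
    · exact hm.aestronglyMeasurable.restrict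
    · have hper' : ∀ x : ℝ, (fun x => (‖g x‖₊ : ℝ≥0∞)) (x + 2 * π)
          = (fun x => (‖g x‖₊ : ℝ≥0∞)) x := by
        intro x; simp [hper x]
      have h1 : ∫⁻ x in Ioc b (b + 2 * π), (‖g x‖₊ : ℝ≥0∞)
          = ∫⁻ x in Ioc (-π) π, (‖g x‖₊ : ℝ≥0∞) :=
        lintegral_Ioc_period _ hper' b
      show ∫⁻ x in Ioc b (b + 2 * π), (‖g x‖₊ : ℝ≥0∞) < ⊤
      rw [h1]
      exact hint.2
  intro x
  refine ⟨Ioc (x - π) (x - π + 2 * π), ?_, key (x - π)⟩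
  apply Ioc_mem_nhds <;> linarith

end Aux

/-- the sets `𝕋_{h,δ}` have zero Lebesgue measure. -/
theorem statement9 (α : ℝ) (hα0 : 0 < α) (hα1 : α < 1)
    (h : ℝ → ℝ) (hmeas : Measurable h) (hnonneg : ∀ t, 0 ≤ h t)
    (hL2 : IntegrableOn (fun t => (h t) ^ 2) (Ioc (-π) π) volume)
    (hlog : IntegrableOn (fun t => Real.log (h t)) (Ioc (-π) π) volume)
    (hN : Nint α h < ⊤) (δ : ℝ) (hδ : 0 < δ) :
    volume {θ ∈ Ioc (-π) π | θ ∈ ThSet h ∧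
      ENNReal.ofReal δ ≤
        Filter.limsup (fun r : ℝ =>
            (ENNReal.ofReal (2 * π))⁻¹ *
              ∫⁻ φ in Ioc (-π) π,
                {φ : ℝ | 2 * h θ ≤ h φ}.indicator
                  (fun φ => ENNReal.ofReal ((1 - r ^ 2) / ‖circ φ - (r : ℂ) * circ θ‖ ^ 2 *
                    Real.log (h φ / h θ))) φ)
          (nhdsWithin 1 (Iio 1))} = 0 := by
  have hpi := Real.pi_pos
  -- the periodization of `h`
  set hT : ℝ → ℝ := fun φ => h (toIocMod Real.two_pi_pos (-π) φ) with hhT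
  have hTmeas : Measurable hT := hmeas.comp measurable_toIocMod'
  have hTper : ∀ x, hT (x + 2 * π) = hT x := fun x => by
    rw [hhT]; simp only; rw [toIocMod_add_right]
  have hTeq : ∀ φ ∈ Ioc (-π) π, hT φ = h φ := by
    intro φ hφ
    rw [hhT]; simp only
    have : toIocMod Real.two_pi_pos (-π) φ = φ :=
      (toIocMod_eq_self _).mpr (by rwa [show -π + 2 * π = π by ring])
    rw [this]
  -- the comparison functions
  set gq : ℚ → ℝ → ℝ := fun q φ =>
    if (q : ℝ) < hT φ then Real.log (hT φ) - Real.log q + Real.log 2 else 0 with hgq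
  have gq_meas : ∀ q, Measurable (gq q) := by
    intro q
    apply Measurable.ite (measurableSet_lt measurable_const hTmeas)
    · exact (hTmeas.log.sub measurable_const).add measurable_const
    · exact measurable_const
  have gq_nonneg : ∀ (q : ℚ), 0 < (q:ℝ) → ∀ φ, 0 ≤ gq q φ := by
    intro q hq φ
    rw [hgq]; simp only
    split
    · rename_i hlt
      have h1 : Real.log q ≤ Real.log (hT φ) := Real.log_le_log hq (le_of_lt hlt)
      have h2 : (0:ℝ) ≤ Real.log 2 := Real.log_nonneg one_le_two
      linarith
    · exact le_refl 0
  have gq_per : ∀ q x, gq q (x + 2 * π) = gq q x := by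
    intro q x
    rw [hgq]; simp only [hTper]
  have gq_int : ∀ (q : ℚ), 0 < (q:ℝ) → IntegrableOn (gq q) (Ioc (-π) π) volume := by
    intro q hq
    apply Integrable.mono'
      (g := fun φ => |Real.log (h φ)| + (|Real.log (q:ℝ)| + Real.log 2))
    · exact hlog.abs.add (integrableOn_const measure_Ioc_lt_top.ne)
    · exact (gq_meas q).aestronglyMeasurable.restrict
    · filter_upwards [ae_restrict_mem measurableSet_Ioc] with φ hφ
      rw [Real.norm_eq_abs, hgq]; simp only
      rw [hTeq φ hφ]
      have h2 : (0:ℝ) ≤ Real.log 2 := Real.log_nonneg one_le_two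
      split
      · have t1 : |Real.log (h φ) - Real.log (q:ℝ)| ≤ |Real.log (h φ)| + |Real.log (q:ℝ)| :=
          abs_sub _ _
        have t2 : |Real.log (h φ) - Real.log (q:ℝ) + Real.log 2|
            ≤ |Real.log (h φ) - Real.log (q:ℝ)| + |Real.log 2| := abs_add_le _ _
        rw [abs_of_nonneg h2] at t2
        linarith
      · simp only [abs_zero]
        positivity
  have gq_locint : ∀ (q : ℚ), 0 < (q:ℝ) → LocallyIntegrable (gq q) volume :=
    fun q hq => periodic_locallyIntegrable (gq_meas q) (gq_per q) (gq_int q hq)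
  -- Lebesgue points
  have key : ∀ᵐ θ : ℝ, ∀ q : ℚ, 0 < (q:ℝ) →
      Tendsto (fun t => ⨍ u in Metric.closedBall θ t, gq q u) (𝓝[>] 0) (𝓝 (gq q θ)) := by
    rw [ae_all_iff]
    intro q
    by_cases hq : 0 < (q:ℝ)
    · filter_upwards [ae_tendsto_average_closedBall (gq q) (gq_locint q hq)] with θ hθ _
      exact hθ
    · filter_upwards with θ hq'
      exact absurd hq' hq
  apply measure_eq_zero_iff_ae_notMem.mpr
  filter_upwards [key] with θ hθq
  rintro ⟨hIoc, hTh, hlim⟩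
  have hh0 : 0 < h θ := hTh.1
  obtain ⟨q, hq1, hq2⟩ := exists_rat_btwn (show h θ < 2 * h θ by linarith)
  have hq0 : 0 < (q:ℝ) := lt_trans hh0 hq1
  have havg := hθq q hq0
  have hgqθ : gq q θ = 0 := by
    rw [hgq]; simp only
    rw [hTeq θ hIoc, if_neg (by push_neg; exact le_of_lt hq1)]
  rw [hgqθ] at havg
  set Gq : ℝ → ℝ≥0∞ := fun u => ENNReal.ofReal (gq q u) with hGq
  have hGmeas : Measurable Gq := (gq_meas q).ennreal_ofReal
  -- the total mass `M`
  have hMint : IntegrableOn (gq q) (Metric.closedBall θ π) volume :=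
    (gq_locint q hq0).integrableOn_isCompact (isCompact_closedBall θ π)
  set M : ℝ := ∫ u in Metric.closedBall θ π, gq q u with hMdef
  have hM0 : 0 ≤ M :=
    setIntegral_nonneg measurableSet_closedBall (fun u _ => gq_nonneg q hq0 u)
  have hMb : ∫⁻ u in Metric.closedBall θ π, Gq u ≤ ENNReal.ofReal M := by
    rw [hGq, hMdef]
    exact le_of_eq (ofReal_integral_eq_lintegral_ofReal hMint
      (Filter.Eventually.of_forall (fun u => gq_nonneg q hq0 u))).symm
  -- choose ε
  set ε : ℝ := δ / (2 * π ^ 2 * (π / 2 + 1)) with hεdef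
  have hε0 : 0 < ε := by
    rw [hεdef]
    have h1 : (0:ℝ) < π / 2 + 1 := by linarith
    positivity
  -- `t₀` from the Lebesgue point property
  have hnear : ∃ t₀ > (0:ℝ), ∀ t, 0 < t → t ≤ t₀ →
      ∫⁻ u in Metric.closedBall θ t, Gq u ≤ ENNReal.ofReal (ε * t) := by
    have hev : (fun t => ⨍ u in Metric.closedBall θ t, gq q u) ⁻¹' (Iio (ε / 2))
        ∈ 𝓝[>] (0:ℝ) := havg (Iio_mem_nhds (by positivity))
    obtain ⟨t₀, ht₀, hsub⟩ := (mem_nhdsGT_iff_exists_Ioc_subset).mp hev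
    refine ⟨t₀, ht₀, ?_⟩
    intro t ht htt₀
    have havgt : (⨍ u in Metric.closedBall θ t, gq q u) < ε / 2 := hsub ⟨ht, htt₀⟩
    have hIb : IntegrableOn (gq q) (Metric.closedBall θ t) volume :=
      (gq_locint q hq0).integrableOn_isCompact (isCompact_closedBall θ t)
    have heq1 : ∫⁻ u in Metric.closedBall θ t, Gq u
        = ENNReal.ofReal (∫ u in Metric.closedBall θ t, gq q u) := by
      rw [hGq]
      exact (ofReal_integral_eq_lintegral_ofReal hIb
        (Filter.Eventually.of_forall (fun u => gq_nonneg q hq0 u))).symm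
    rw [heq1]
    apply ENNReal.ofReal_le_ofReal
    have havg_eq := setAverage_eq (μ := volume) (gq q) (Metric.closedBall θ t)
    rw [Real.volume_real_closedBall (by linarith)] at havg_eq
    have h2t : (0:ℝ) < 2 * t := by linarith
    have hint_eq : ∫ u in Metric.closedBall θ t, gq q u
        = (2 * t) * ⨍ u in Metric.closedBall θ t, gq q u := by
      rw [havg_eq, smul_eq_mul, ← mul_assoc, mul_inv_cancel₀ (ne_of_gt h2t), one_mul]
    rw [hint_eq]
    calc (2 * t) * ⨍ u in Metric.closedBall θ t, gq q u
        ≤ (2 * t) * (ε / 2) := by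
          apply mul_le_mul_of_nonneg_left (le_of_lt havgt) (le_of_lt h2t)
      _ = ε * t := by ring
  obtain ⟨t₀, ht₀, hA⟩ := hnear
  -- eventual bound on the Poisson-type integral
  have hbound : ∀ r : ℝ, max (1/2) (1 - ε * t₀ ^ 2 / (M + 1)) < r → r < 1 →
      (ENNReal.ofReal (2 * π))⁻¹ *
        ∫⁻ φ in Ioc (-π) π,
          {φ : ℝ | 2 * h θ ≤ h φ}.indicator
            (fun φ => ENNReal.ofReal ((1 - r ^ 2) / ‖circ φ - (r : ℂ) * circ θ‖ ^ 2 *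
              Real.log (h φ / h θ))) φ
      ≤ ENNReal.ofReal (δ / 2) := by
    intro r hrc hr1
    have hr2 : 1/2 ≤ r := le_of_lt (lt_of_le_of_lt (le_max_left _ _) hrc)
    set s : ℝ := 1 - r with hsdef
    have hs : 0 < s := by rw [hsdef]; linarith
    have hsmall : M * (s / t₀ ^ 2) ≤ ε := by
      have hr3 : 1 - ε * t₀ ^ 2 / (M + 1) < r := lt_of_le_of_lt (le_max_right _ _) hrc
      have hM1 : (0:ℝ) < M + 1 := by linarith
      have hsε : s < ε * t₀ ^ 2 / (M + 1) := by rw [hsdef]; linarith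
      have h5 : s * (M + 1) < ε * t₀ ^ 2 := (lt_div_iff₀ hM1).mp hsε
      rw [mul_div_assoc', div_le_iff₀ (by positivity : (0:ℝ) < t₀ ^ 2)]
      nlinarith [hs.le, hM0]
    -- the periodized integrand
    set fper : ℝ → ℝ≥0∞ := fun φ =>
      ({φ : ℝ | 2 * h θ ≤ hT φ}).indicator
        (fun φ => ENNReal.ofReal ((1 - r ^ 2) / ‖circ φ - (r : ℂ) * circ θ‖ ^ 2 *
          Real.log (hT φ / h θ))) φ with hfper
    have hstepA : ∫⁻ φ in Ioc (-π) π,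
        {φ : ℝ | 2 * h θ ≤ h φ}.indicator
          (fun φ => ENNReal.ofReal ((1 - r ^ 2) / ‖circ φ - (r : ℂ) * circ θ‖ ^ 2 *
            Real.log (h φ / h θ))) φ
        = ∫⁻ φ in Ioc (-π) π, fper φ := by
      apply setLIntegral_congr_fun measurableSet_Ioc
      intro φ hφ
      rw [hfper]
      simp only [indicator_apply, mem_setOf_eq, hTeq φ hφ]
    have hper' : ∀ x, fper (x + 2 * π) = fper x := by
      intro x
      rw [hfper]
      simp only [indicator_apply, mem_setOf_eq, hTper x, circ_periodic x]
    have hstepB : ∫⁻ φ in Ioc (-π) π, fper φ = ∫⁻ φ in Ioc (θ - π) (θ + π), fper φ :=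
      lintegral_Ioc_center fper hper' hIoc
    have hstepC : ∫⁻ φ in Ioc (θ - π) (θ + π), fper φ
        ≤ ∫⁻ φ in Ioc (θ - π) (θ + π),
            ENNReal.ofReal (π ^ 2) * (ENNReal.ofReal (s / (s ^ 2 + (φ - θ) ^ 2)) * Gq φ) := by
      apply setLIntegral_mono' measurableSet_Ioc
      intro φ hφ
      have habs : |φ - θ| ≤ π := abs_le.mpr ⟨by linarith [hφ.1], by linarith [hφ.2]⟩
      rw [hfper]
      simp only [indicator_apply, mem_setOf_eq]
      split
      · rename_i hind
        have hTφpos : 0 < hT φ := lt_of_lt_of_le (by linarith) hind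
        have hK0 : (0:ℝ) ≤ (1 - r ^ 2) / ‖circ φ - (r:ℂ) * circ θ‖ ^ 2 :=
          div_nonneg (by nlinarith) (sq_nonneg _)
        have hL0 : (0:ℝ) ≤ Real.log (hT φ / h θ) :=
          Real.log_nonneg ((one_le_div hh0).mpr (by linarith))
        rw [ENNReal.ofReal_mul hK0]
        have hker : ENNReal.ofReal ((1 - r ^ 2) / ‖circ φ - (r:ℂ) * circ θ‖ ^ 2)
            ≤ ENNReal.ofReal (π ^ 2) * ENNReal.ofReal (s / (s ^ 2 + (φ - θ) ^ 2)) := by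
          rw [← ENNReal.ofReal_mul (by positivity)]
          apply ENNReal.ofReal_le_ofReal
          have hub := kernel_ub hr2 hr1 habs
          calc (1 - r ^ 2) / ‖circ φ - (r:ℂ) * circ θ‖ ^ 2
              ≤ π ^ 2 * (1 - r) / ((1 - r) ^ 2 + (φ - θ) ^ 2) := hub
            _ = π ^ 2 * (s / (s ^ 2 + (φ - θ) ^ 2)) := by rw [hsdef, mul_div_assoc]
        have hlog2 : ENNReal.ofReal (Real.log (hT φ / h θ)) ≤ Gq φ := by
          rw [hGq]
          apply ENNReal.ofReal_le_ofReal
          rw [hgq]; simp only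
          have hqlt : (q:ℝ) < hT φ := lt_of_lt_of_le hq2 hind
          rw [if_pos hqlt]
          rw [Real.log_div (ne_of_gt hTφpos) (ne_of_gt hh0)]
          have hlogq : Real.log (q:ℝ) ≤ Real.log (2 * h θ) :=
            Real.log_le_log hq0 (le_of_lt hq2)
          rw [Real.log_mul two_ne_zero (ne_of_gt hh0)] at hlogq
          linarith
        calc ENNReal.ofReal ((1 - r ^ 2) / ‖circ φ - (r:ℂ) * circ θ‖ ^ 2) *
              ENNReal.ofReal (Real.log (hT φ / h θ))
            ≤ (ENNReal.ofReal (π ^ 2) * ENNReal.ofReal (s / (s ^ 2 + (φ - θ) ^ 2))) * Gq φ :=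
              mul_le_mul' hker hlog2
          _ = ENNReal.ofReal (π ^ 2) * (ENNReal.ofReal (s / (s ^ 2 + (φ - θ) ^ 2)) * Gq φ) :=
              mul_assoc _ _ _
      · exact zero_le'
    have hkermeas : Measurable (fun φ : ℝ => ENNReal.ofReal (s / (s ^ 2 + (φ - θ) ^ 2)) * Gq φ) := by
      apply Measurable.mul _ hGmeas
      apply Measurable.ennreal_ofReal
      exact measurable_const.div
        (measurable_const.add ((measurable_id.sub measurable_const).pow_const 2))
    have hstepD : ∫⁻ φ in Ioc (θ - π) (θ + π),
          ENNReal.ofReal (π ^ 2) * (ENNReal.ofReal (s / (s ^ 2 + (φ - θ) ^ 2)) * Gq φ)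
        = ENNReal.ofReal (π ^ 2) *
          ∫⁻ φ in Ioc (θ - π) (θ + π), ENNReal.ofReal (s / (s ^ 2 + (φ - θ) ^ 2)) * Gq φ :=
      lintegral_const_mul _ hkermeas
    have hstepE := poisson_bound Gq hGmeas θ s t₀ ε M hs ht₀ hε0.le hM0 hA hMb
    have hIneq : ∫⁻ φ in Ioc (-π) π,
        {φ : ℝ | 2 * h θ ≤ h φ}.indicator
          (fun φ => ENNReal.ofReal ((1 - r ^ 2) / ‖circ φ - (r : ℂ) * circ θ‖ ^ 2 *
            Real.log (h φ / h θ))) φ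
        ≤ ENNReal.ofReal (π ^ 2) *
            (ENNReal.ofReal (ε * (π / 2)) + ENNReal.ofReal (M * (s / t₀ ^ 2))) := by
      rw [hstepA, hstepB]
      calc ∫⁻ φ in Ioc (θ - π) (θ + π), fper φ
          ≤ ∫⁻ φ in Ioc (θ - π) (θ + π),
              ENNReal.ofReal (π ^ 2) * (ENNReal.ofReal (s / (s ^ 2 + (φ - θ) ^ 2)) * Gq φ) :=
            hstepC
        _ = ENNReal.ofReal (π ^ 2) *
              ∫⁻ φ in Ioc (θ - π) (θ + π), ENNReal.ofReal (s / (s ^ 2 + (φ - θ) ^ 2)) * Gq φ :=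
            hstepD
        _ ≤ ENNReal.ofReal (π ^ 2) *
              (ENNReal.ofReal (ε * (π / 2)) + ENNReal.ofReal (M * (s / t₀ ^ 2))) :=
            mul_le_mul_right hstepE _
    have h2π : (ENNReal.ofReal (2 * π))⁻¹ ≤ 1 := by
      apply ENNReal.inv_le_one.mpr
      rw [show (1:ℝ≥0∞) = ENNReal.ofReal 1 from (ENNReal.ofReal_one).symm]
      exact ENNReal.ofReal_le_ofReal (by linarith [Real.pi_gt_three])
    calc (ENNReal.ofReal (2 * π))⁻¹ *
          ∫⁻ φ in Ioc (-π) π,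
            {φ : ℝ | 2 * h θ ≤ h φ}.indicator
              (fun φ => ENNReal.ofReal ((1 - r ^ 2) / ‖circ φ - (r : ℂ) * circ θ‖ ^ 2 *
                Real.log (h φ / h θ))) φ
        ≤ 1 * (ENNReal.ofReal (π ^ 2) *
            (ENNReal.ofReal (ε * (π / 2)) + ENNReal.ofReal (M * (s / t₀ ^ 2)))) :=
          mul_le_mul' h2π hIneq
      _ = ENNReal.ofReal (π ^ 2) *
            (ENNReal.ofReal (ε * (π / 2)) + ENNReal.ofReal (M * (s / t₀ ^ 2))) := one_mul _
      _ ≤ ENNReal.ofReal (π ^ 2) * (ENNReal.ofReal (ε * (π / 2)) + ENNReal.ofReal ε) := by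
          apply mul_le_mul_right
          exact add_le_add_right (ENNReal.ofReal_le_ofReal hsmall) _
      _ = ENNReal.ofReal (π ^ 2 * (ε * (π / 2) + ε)) := by
          rw [← ENNReal.ofReal_add (by positivity) hε0.le,
            ← ENNReal.ofReal_mul (by positivity)]
      _ ≤ ENNReal.ofReal (δ / 2) := by
          apply ENNReal.ofReal_le_ofReal
          apply le_of_eq
          rw [hεdef]
          have hπ2 : (π / 2 + 1) ≠ 0 := by positivity
          field_simp
  -- conclude by contradiction with the limsup hypothesis
  have hevent : ∀ᶠ r : ℝ in nhdsWithin (1:ℝ) (Iio 1),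
      (ENNReal.ofReal (2 * π))⁻¹ *
        ∫⁻ φ in Ioc (-π) π,
          {φ : ℝ | 2 * h θ ≤ h φ}.indicator
            (fun φ => ENNReal.ofReal ((1 - r ^ 2) / ‖circ φ - (r : ℂ) * circ θ‖ ^ 2 *
              Real.log (h φ / h θ))) φ
      ≤ ENNReal.ofReal (δ / 2) := by
    have hlt : max (1/2 : ℝ) (1 - ε * t₀ ^ 2 / (M + 1)) < 1 := by
      apply max_lt (by norm_num)
      have : (0:ℝ) < ε * t₀ ^ 2 / (M + 1) := by positivity
      linarith
    have hmem : Ioo (max (1/2 : ℝ) (1 - ε * t₀ ^ 2 / (M + 1))) 1 ∈ nhdsWithin (1:ℝ) (Iio 1) :=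
      Ioo_mem_nhdsLT_of_mem ⟨hlt, le_refl 1⟩
    filter_upwards [hmem] with r hr
    exact hbound r hr.1 hr.2
  have hLs := Filter.limsup_le_of_le (by isBoundedDefault) hevent
  have hcontra := le_trans hlim hLs
  rw [ENNReal.ofReal_le_ofReal_iff (by linarith)] at hcontra
  linarith

end
end

section
/- There exists a constant c > 0, independent of α, such that for all real numbers 0 < α < 1, 0 < μ ≤ 1 and 0 < u ≤ 2 with u ≤ μ, one has (1/(1-α)) ∫_{1-μ}^{1} ((r u² - (1-r)²)/(((1-r)² + r u²)²)) (1-r)^{α-1} r dr ≥ c u^{α-2}. -/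
open MeasureTheory Real Set Filter
open scoped ENNReal NNReal Topology

noncomputable section

set_option maxHeartbeats 1000000 in
/-- the elementary one-dimensional integral estimate. -/
theorem statement16 :
    ∃ c : ℝ, 0 < c ∧
      ∀ α μ u : ℝ, 0 < α → α < 1 → 0 < μ → μ ≤ 1 → 0 < u → u ≤ 2 → u ≤ μ →
        c * u ^ (α - 2) ≤
          (1 / (1 - α)) *
            ∫ r in Ioo (1 - μ) 1,
              (r * u ^ 2 - (1 - r) ^ 2) / ((1 - r) ^ 2 + r * u ^ 2) ^ 2 *
                (1 - r) ^ (α - 1) * r := by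
  refine ⟨1/8, by norm_num, ?_⟩
  intro α μ u hα0 hα1 hμ0 hμ1 hu0 hu2 huμ
  have hu1 : u ≤ 1 := huμ.trans hμ1
  have h1α : (0:ℝ) < 1 - α := by linarith
  set f : ℝ → ℝ := fun r => (r * u ^ 2 - (1 - r) ^ 2) / ((1 - r) ^ 2 + r * u ^ 2) ^ 2 *
      (1 - r) ^ (α - 1) * r with hfdef
  set g : ℝ → ℝ := fun r => (1 - r) ^ (α - 1) *
      (((1 - α) * r * ((1 - r) ^ 2 + r * u ^ 2) + (1 - r) ^ 3) /
        ((1 - r) ^ 2 + r * u ^ 2) ^ 2) with hgdef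
  set F : ℝ → ℝ := fun r => (1 - r) ^ α * r / ((1 - r) ^ 2 + r * u ^ 2) with hFdef
  -- basic facts about D
  have hD4 : ∀ r : ℝ, 0 ≤ r → r ≤ 1 → u ^ 2 / 4 ≤ (1 - r) ^ 2 + r * u ^ 2 := by
    intro r h0 h1
    rcases le_or_gt r (1/2) with h | h
    · nlinarith [mul_nonneg h0 (sq_nonneg u)]
    · nlinarith [sq_nonneg (1 - r), sq_nonneg u]
  have hDpos : ∀ r : ℝ, 0 ≤ r → r ≤ 1 → 0 < (1 - r) ^ 2 + r * u ^ 2 := by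
    intro r h0 h1
    have := hD4 r h0 h1
    nlinarith [sq_nonneg u]
  -- the derivative identity
  have hderiv : ∀ r ∈ Ioo (1 - μ) 1, HasDerivAt F (g r - f r) r := by
    intro r hr
    obtain ⟨hrl, hrr⟩ := hr
    have hr0 : (0:ℝ) < r := lt_of_le_of_lt (by linarith) hrl
    have h1r : (0:ℝ) < 1 - r := by linarith
    have hDp : 0 < (1 - r) ^ 2 + r * u ^ 2 := hDpos r hr0.le hrr.le
    have h1 : HasDerivAt (fun r : ℝ => 1 - r) (-1) r := by
      simpa using (hasDerivAt_id r).const_sub 1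
    have h2 : HasDerivAt (fun r : ℝ => (1 - r) ^ α) (-1 * α * (1 - r) ^ (α - 1)) r :=
      h1.rpow_const (Or.inl h1r.ne')
    have h3 : HasDerivAt (fun r : ℝ => (1 - r) ^ α * r)
        (-1 * α * (1 - r) ^ (α - 1) * r + (1 - r) ^ α * 1) r := h2.mul (hasDerivAt_id r)
    have h4 : HasDerivAt (fun r : ℝ => (1 - r) ^ 2 + r * u ^ 2)
        ((2 : ℕ) * (1 - r) ^ (2 - 1) * (-1) + 1 * u ^ 2) r :=
      (h1.pow 2).add ((hasDerivAt_id r).mul_const (u ^ 2))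
    have h5 := h3.div h4 hDp.ne'
    have hkey : (1 - r) ^ α = (1 - r) ^ (α - 1) * (1 - r) := by
      rw [← Real.rpow_add_one h1r.ne' (α - 1), show α - 1 + 1 = α from by ring]
    refine HasDerivAt.congr_deriv h5 ?_
    symm
    rw [hgdef, hfdef]
    simp only
    rw [hkey]
    have hDne : ((1 - r) ^ 2 + r * u ^ 2) ≠ 0 := hDp.ne'
    field_simp
    ring
  -- continuity of F on the closed interval
  have hcont : ContinuousOn F (Icc (1 - μ) 1) := by
    apply ContinuousOn.div
    · exact ((continuousOn_const.sub continuousOn_id).rpow_const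
        (fun x _ => Or.inr hα0.le)).mul continuousOn_id
    · fun_prop
    · intro x hx
      exact (hDpos x (by linarith [hx.1]) hx.2).ne'
  -- integrability of the rpow weight
  have hle : (1:ℝ) - μ ≤ 1 := by linarith
  have hpowII : IntervalIntegrable (fun r : ℝ => (1 - r) ^ (α - 1)) volume (1 - μ) 1 := by
    have h0 : IntervalIntegrable (fun x : ℝ => x ^ (α - 1)) volume 0 μ :=
      intervalIntegral.intervalIntegrable_rpow' (by linarith)
    have := (h0.comp_sub_left 1).symm
    simpa using this
  have hpowIoc : IntegrableOn (fun r : ℝ => (1 - r) ^ (α - 1)) (Ioc (1 - μ) 1) volume :=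
    (intervalIntegrable_iff_integrableOn_Ioc_of_le hle).mp hpowII
  -- integrability of f and g
  have hmeasf : Measurable f := by
    rw [hfdef]; fun_prop
  have hmeasg : Measurable g := by
    rw [hgdef]; fun_prop
  have hboundf : ∀ r ∈ Ioc (1 - μ) 1, ‖f r‖ ≤ 4 / u ^ 2 * (1 - r) ^ (α - 1) := by
    intro r hr
    obtain ⟨hrl, hrr⟩ := hr
    have hr0 : (0:ℝ) < r := lt_of_le_of_lt (by linarith) hrl
    have h1r : (0:ℝ) ≤ 1 - r := by linarith
    have hDp : 0 < (1 - r) ^ 2 + r * u ^ 2 := hDpos r hr0.le hrr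
    have hX : (0:ℝ) ≤ (1 - r) ^ (α - 1) := Real.rpow_nonneg h1r _
    have hA : |r * u ^ 2 - (1 - r) ^ 2| ≤ (1 - r) ^ 2 + r * u ^ 2 := by
      rw [abs_le]
      constructor
      · nlinarith [mul_nonneg hr0.le (sq_nonneg u)]
      · nlinarith [sq_nonneg (1 - r)]
    have h4Du : u ^ 2 ≤ 4 * ((1 - r) ^ 2 + r * u ^ 2) := by
      linarith [hD4 r hr0.le hrr]
    have h6 : |r * u ^ 2 - (1 - r) ^ 2| / ((1 - r) ^ 2 + r * u ^ 2) ^ 2 ≤ 4 / u ^ 2 := by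
      obtain ⟨D, hDdef⟩ : ∃ D, D = (1 - r) ^ 2 + r * u ^ 2 := ⟨_, rfl⟩
      rw [← hDdef] at hA h4Du hDp ⊢
      rw [div_le_div_iff₀ (by positivity) (by positivity)]
      nlinarith [mul_le_mul hA h4Du (sq_nonneg u) hDp.le, abs_nonneg (r * u ^ 2 - (1 - r) ^ 2)]
    rw [hfdef]
    simp only [Real.norm_eq_abs]
    rw [abs_mul, abs_mul, abs_div, abs_of_nonneg hX, abs_of_nonneg hr0.le,
      abs_of_nonneg (by positivity : (0:ℝ) ≤ ((1 - r) ^ 2 + r * u ^ 2) ^ 2)]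
    calc |r * u ^ 2 - (1 - r) ^ 2| / ((1 - r) ^ 2 + r * u ^ 2) ^ 2 * (1 - r) ^ (α - 1) * r
        ≤ 4 / u ^ 2 * (1 - r) ^ (α - 1) * 1 := by
          apply mul_le_mul _ hrr hr0.le (by positivity)
          exact mul_le_mul_of_nonneg_right h6 hX
      _ = 4 / u ^ 2 * (1 - r) ^ (α - 1) := mul_one _
  have hboundg : ∀ r ∈ Ioc (1 - μ) 1, ‖g r‖ ≤ 8 / u ^ 2 * (1 - r) ^ (α - 1) := by
    intro r hr
    obtain ⟨hrl, hrr⟩ := hr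
    have hr0 : (0:ℝ) < r := lt_of_le_of_lt (by linarith) hrl
    have h1r : (0:ℝ) ≤ 1 - r := by linarith
    have hDp : 0 < (1 - r) ^ 2 + r * u ^ 2 := hDpos r hr0.le hrr
    have hX : (0:ℝ) ≤ (1 - r) ^ (α - 1) := Real.rpow_nonneg h1r _
    have hQ0 : (0:ℝ) ≤ (1 - α) * r * ((1 - r) ^ 2 + r * u ^ 2) + (1 - r) ^ 3 := by
      have := pow_nonneg h1r 3
      nlinarith [mul_nonneg (mul_nonneg h1α.le hr0.le) hDp.le]
    have hQle : (1 - α) * r * ((1 - r) ^ 2 + r * u ^ 2) + (1 - r) ^ 3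
        ≤ 2 * ((1 - r) ^ 2 + r * u ^ 2) := by
      nlinarith [mul_nonneg hr0.le (sq_nonneg u), sq_nonneg (1 - r),
        mul_nonneg (mul_nonneg hα0.le hr0.le) hDp.le]
    have h4Du : u ^ 2 ≤ 4 * ((1 - r) ^ 2 + r * u ^ 2) := by
      linarith [hD4 r hr0.le hrr]
    have h6 : ((1 - α) * r * ((1 - r) ^ 2 + r * u ^ 2) + (1 - r) ^ 3) /
        ((1 - r) ^ 2 + r * u ^ 2) ^ 2 ≤ 8 / u ^ 2 := by
      obtain ⟨D, hDdef⟩ : ∃ D, D = (1 - r) ^ 2 + r * u ^ 2 := ⟨_, rfl⟩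
      rw [← hDdef] at hQle h4Du hDp hQ0 ⊢
      rw [div_le_div_iff₀ (by positivity) (by positivity)]
      nlinarith [mul_le_mul hQle h4Du (sq_nonneg u) (by linarith : (0:ℝ) ≤ 2 * D)]
    rw [hgdef]
    simp only [Real.norm_eq_abs]
    rw [abs_mul, abs_of_nonneg hX, abs_div, abs_of_nonneg hQ0,
      abs_of_nonneg (by positivity : (0:ℝ) ≤ ((1 - r) ^ 2 + r * u ^ 2) ^ 2), mul_comm]
    exact mul_le_mul_of_nonneg_right h6 hX
  have hfIoc : IntegrableOn f (Ioc (1 - μ) 1) volume := by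
    apply Integrable.mono' (hpowIoc.const_mul (4 / u ^ 2)) hmeasf.aestronglyMeasurable
    filter_upwards [ae_restrict_mem measurableSet_Ioc] with r hr
    exact hboundf r hr
  have hgIoc : IntegrableOn g (Ioc (1 - μ) 1) volume := by
    apply Integrable.mono' (hpowIoc.const_mul (8 / u ^ 2)) hmeasg.aestronglyMeasurable
    filter_upwards [ae_restrict_mem measurableSet_Ioc] with r hr
    exact hboundg r hr
  have hfIoo : IntegrableOn f (Ioo (1 - μ) 1) volume := hfIoc.mono_set Ioo_subset_Ioc_self
  have hgIoo : IntegrableOn g (Ioo (1 - μ) 1) volume := hgIoc.mono_set Ioo_subset_Ioc_self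
  -- FTC
  have hFTC : ∫ y in (1 - μ)..1, (g y - f y) = F 1 - F (1 - μ) := by
    apply intervalIntegral.integral_eq_sub_of_hasDerivAt_of_le hle hcont hderiv
    exact (intervalIntegrable_iff_integrableOn_Ioc_of_le hle).mpr (hgIoc.sub hfIoc)
  rw [intervalIntegral.integral_of_le hle, integral_Ioc_eq_integral_Ioo,
    integral_sub hgIoo hfIoo] at hFTC
  have hF1 : F 1 = 0 := by
    rw [hFdef]
    simp [Real.zero_rpow hα0.ne']
  have hFμ : 0 ≤ F (1 - μ) := by
    rw [hFdef]
    simp only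
    apply div_nonneg
    · exact mul_nonneg (Real.rpow_nonneg (by linarith) _) (by linarith)
    · exact (hDpos (1 - μ) (by linarith) (by linarith)).le
  have hkey1 : ∫ r in Ioo (1 - μ) 1, g r ≤ ∫ r in Ioo (1 - μ) 1, f r := by
    have : (∫ r in Ioo (1 - μ) 1, g r) - ∫ r in Ioo (1 - μ) 1, f r = 0 - F (1 - μ) := by
      rw [hFTC, hF1]
    linarith
  -- restrict to the small interval
  have hsub : Ioo (1 - u/2) 1 ⊆ Ioo (1 - μ) 1 := Ioo_subset_Ioo (by linarith) le_rfl
  have hg0 : 0 ≤ᵐ[volume.restrict (Ioo (1 - μ) 1)] g := by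
    filter_upwards [ae_restrict_mem measurableSet_Ioo] with r hr
    obtain ⟨hrl, hrr⟩ := hr
    have hr0 : (0:ℝ) < r := lt_of_le_of_lt (by linarith) hrl
    have h1r : (0:ℝ) ≤ 1 - r := by linarith
    have hDp : 0 < (1 - r) ^ 2 + r * u ^ 2 := hDpos r hr0.le hrr.le
    rw [hgdef]
    apply mul_nonneg (Real.rpow_nonneg h1r _)
    obtain ⟨D, hDdef⟩ : ∃ D, D = (1 - r) ^ 2 + r * u ^ 2 := ⟨_, rfl⟩
    rw [← hDdef] at hDp ⊢
    apply div_nonneg _ (by positivity)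
    have := pow_nonneg h1r 3
    nlinarith [mul_nonneg (mul_nonneg h1α.le hr0.le) hDp.le]
  have hmono : ∫ r in Ioo (1 - u/2) 1, g r ≤ ∫ r in Ioo (1 - μ) 1, g r :=
    setIntegral_mono_set hgIoo hg0 (HasSubset.Subset.eventuallyLE hsub)
  -- pointwise lower bound on the small interval
  have hlow : ∀ r ∈ Ioo (1 - u/2) 1,
      (1 - r) ^ (α - 1) * ((1 - α) / (4 * u ^ 2)) ≤ g r := by
    intro r hr
    obtain ⟨hrl, hrr⟩ := hr
    have hr0 : (1:ℝ)/2 ≤ r := by linarith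
    have h1r : (0:ℝ) ≤ 1 - r := by linarith
    have h1ru : 1 - r ≤ u / 2 := by linarith
    have hDp : 0 < (1 - r) ^ 2 + r * u ^ 2 := hDpos r (by linarith) hrr.le
    have hD2 : (1 - r) ^ 2 + r * u ^ 2 ≤ 2 * u ^ 2 := by
      nlinarith [sq_nonneg u]
    have hX : (0:ℝ) ≤ (1 - r) ^ (α - 1) := Real.rpow_nonneg h1r _
    rw [hgdef]
    apply mul_le_mul_of_nonneg_left _ hX
    obtain ⟨D, hDdef⟩ : ∃ D, D = (1 - r) ^ 2 + r * u ^ 2 := ⟨_, rfl⟩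
    rw [← hDdef] at hDp hD2 ⊢
    have hQlow : (1 - α) * D / 2 ≤ (1 - α) * r * D + (1 - r) ^ 3 := by
      nlinarith [pow_nonneg h1r 3, mul_nonneg h1α.le hDp.le]
    rw [div_le_div_iff₀ (by positivity) (by positivity)]
    nlinarith [mul_le_mul_of_nonneg_left hD2 (mul_nonneg h1α.le hDp.le),
      mul_le_mul_of_nonneg_right hQlow (by positivity : (0:ℝ) ≤ 4 * u ^ 2)]
  have hpowSmall : IntegrableOn (fun r : ℝ => (1 - r) ^ (α - 1) * ((1 - α) / (4 * u ^ 2)))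
      (Ioo (1 - u/2) 1) volume := by
    apply Integrable.mul_const
    exact (hpowIoc.mono_set (hsub.trans Ioo_subset_Ioc_self))
  have hgSmall : IntegrableOn g (Ioo (1 - u/2) 1) volume :=
    hgIoc.mono_set (hsub.trans Ioo_subset_Ioc_self)
  have hmono2 : ∫ r in Ioo (1 - u/2) 1, (1 - r) ^ (α - 1) * ((1 - α) / (4 * u ^ 2))
      ≤ ∫ r in Ioo (1 - u/2) 1, g r :=
    setIntegral_mono_on hpowSmall hgSmall measurableSet_Ioo hlow
  -- compute the lower integral
  have hval : ∫ r in Ioo (1 - u/2) 1, (1 - r) ^ (α - 1) = (u/2) ^ α / α := by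
    rw [← integral_Ioc_eq_integral_Ioo, ← intervalIntegral.integral_of_le (by linarith)]
    have := intervalIntegral.integral_comp_sub_left (a := 1 - u/2) (b := 1)
      (fun x : ℝ => x ^ (α - 1)) 1
    rw [this]
    rw [show (1:ℝ) - 1 = 0 by ring, show (1:ℝ) - (1 - u/2) = u/2 by ring]
    rw [integral_rpow (Or.inl (by linarith))]
    rw [show α - 1 + 1 = α from by ring, Real.zero_rpow hα0.ne']
    ring
  have hval2 : ∫ r in Ioo (1 - u/2) 1, (1 - r) ^ (α - 1) * ((1 - α) / (4 * u ^ 2))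
      = (u/2) ^ α / α * ((1 - α) / (4 * u ^ 2)) := by
    rw [integral_mul_const, hval]
  -- put everything together
  have hchain : (u/2) ^ α / α * ((1 - α) / (4 * u ^ 2)) ≤ ∫ r in Ioo (1 - μ) 1, f r := by
    rw [← hval2]
    exact le_trans hmono2 (le_trans hmono hkey1)
  have hfinal : 1/8 * u ^ (α - 2) ≤ 1 / (1 - α) * ((u/2) ^ α / α * ((1 - α) / (4 * u ^ 2))) := by
    have heq : 1 / (1 - α) * ((u/2) ^ α / α * ((1 - α) / (4 * u ^ 2)))
        = (u/2) ^ α * (1 / (α * (4 * u ^ 2))) := by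
      field_simp
    rw [heq]
    have h2c : u ^ (α - 2) = u ^ α / u ^ 2 := by
      rw [Real.rpow_sub hu0]
      norm_num
    have e1 : u ^ α / 2 ≤ (u/2) ^ α := by
      rw [Real.div_rpow hu0.le (by norm_num)]
      apply div_le_div_of_nonneg_left (Real.rpow_nonneg hu0.le _) (by positivity)
      calc (2:ℝ) ^ α ≤ (2:ℝ) ^ (1:ℝ) :=
            Real.rpow_le_rpow_of_exponent_le (by norm_num) hα1.le
        _ = 2 := Real.rpow_one 2
    have hup : (0:ℝ) < u ^ α := Real.rpow_pos_of_pos hu0 _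
    calc 1/8 * u ^ (α - 2) = (u ^ α / 2) * (1 / (4 * u ^ 2)) := by rw [h2c]; ring
      _ ≤ (u/2) ^ α * (1 / (4 * u ^ 2)) := mul_le_mul_of_nonneg_right e1 (by positivity)
      _ ≤ (u/2) ^ α * (1 / (α * (4 * u ^ 2))) := by
          apply mul_le_mul_of_nonneg_left _ (by positivity)
          apply one_div_le_one_div_of_le (by positivity)
          nlinarith [sq_nonneg u]
  calc 1/8 * u ^ (α - 2)
      ≤ 1 / (1 - α) * ((u/2) ^ α / α * ((1 - α) / (4 * u ^ 2))) := hfinal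
    _ ≤ 1 / (1 - α) * ∫ r in Ioo (1 - μ) 1, f r :=
        mul_le_mul_of_nonneg_left hchain (by positivity)


end
end
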